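/- Let p be prime and n ≥ 1. If 1 ≤ k ≤ s_p(n), then there exist positive integers j_1,...,j_k with j_1+...+j_k = n and s_p(j_1)+...+s_p(j_k) = s_p(n). -/

import Mathlib

/-- base-p digit sum -/
def sp (p n : ℕ) : ℕ := (Nat.digits p n).sum

theorem sp_mul_base (p : ℕ) (hp : 2 ≤ p) (x : ℕ) (hx : x ≠ 0) :
    sp p (p * x) = sp p x := by
  have hpx : 0 < p * x := Nat.mul_pos (by omega) (Nat.pos_of_ne_zero hx)
  unfold sp
  rw [Nat.digits_def' (by omega : 1 < p) hpx]
  simp [Nat.mul_mod_right, Nat.mul_div_cancel_left _ (by omega : 0 < p)]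

theorem sp_pow_mul (p : ℕ) (hp : 2 ≤ p) (v x : ℕ) (hx : x ≠ 0) :
    sp p (p ^ v * x) = sp p x := by
  induction v with
  | zero => simp
  | succ v ih =>
    have : p ^ (v + 1) * x = p * (p ^ v * x) := by ring
    rw [this, sp_mul_base p hp _ (by positivity), ih]

theorem sp_one (p : ℕ) (hp : 2 ≤ p) : sp p 1 = 1 := by
  unfold sp
  rw [Nat.digits_def' (by omega : 1 < p) one_pos,
    Nat.mod_eq_of_lt (by omega), Nat.div_eq_of_lt (by omega)]
  simp

theorem sp_pow (p : ℕ) (hp : 2 ≤ p) (v : ℕ) : sp p (p ^ v) = 1 := by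
  have := sp_pow_mul p hp v 1 one_ne_zero
  rw [Nat.mul_one] at this
  rw [this, sp_one p hp]

theorem sp_pred (p : ℕ) (hp : 2 ≤ p) (u : ℕ) (hu : ¬ p ∣ u) (h1 : 1 ≤ u) :
    sp p u = sp p (u - 1) + 1 := by
  have hr1 : 1 ≤ u % p := by
    rcases Nat.eq_zero_or_pos (u % p) with h | h
    · exact absurd (Nat.dvd_of_mod_eq_zero h) hu
    · exact h
  have hdm := Nat.div_add_mod u p
  rcases Nat.lt_or_ge u 2 with h2 | h2
  · interval_cases u
    simp [sp, Nat.digits_def' (by omega : 1 < p) (by omega : 0 < 1),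
      Nat.mod_eq_of_lt (by omega : 1 < p), Nat.div_eq_of_lt (by omega : 1 < p)]
  · -- u ≥ 2
    set q := u / p with hq
    set r := u % p with hrdef
    have hrp : r < p := Nat.mod_lt _ (by omega)
    have hu1 : u - 1 = p * q + (r - 1) := by omega
    have hupos : 0 < u := by omega
    have hu1pos : 0 < u - 1 := by
      rcases Nat.eq_zero_or_pos (u - 1) with h | h
      · -- u = 1, but u ≥ 2
        omega
      · exact h
    have hmod : (u - 1) % p = r - 1 := by
      rw [hu1, Nat.mul_add_mod, Nat.mod_eq_of_lt (by omega)]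
    have hdiv : (u - 1) / p = q := by
      rw [hu1, Nat.mul_add_div (by omega), Nat.div_eq_of_lt (by omega)]
      omega
    unfold sp
    rw [Nat.digits_def' (by omega : 1 < p) hupos,
      Nat.digits_def' (by omega : 1 < p) hu1pos, hmod, hdiv, ← hq, ← hrdef]
    simp only [List.sum_cons]
    omega

theorem exists_composition_digitSum_eq (p : ℕ) (hp : p.Prime) (n k : ℕ)
    (hn : 1 ≤ n) (hk1 : 1 ≤ k) (hk2 : k ≤ sp p n) :
    ∃ j : Fin k → ℕ, (∀ i, 1 ≤ j i) ∧ (∑ i, j i = n) ∧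
      (∑ i, sp p (j i) = sp p n) := by
  have hp2 : 2 ≤ p := hp.two_le
  induction k generalizing n with
  | zero => omega
  | succ k ih =>
    rcases Nat.eq_zero_or_pos k with hk0 | hkpos
    · subst hk0
      refine ⟨fun _ => n, fun i => hn, ?_, ?_⟩ <;> simp
    · -- k ≥ 1, so sp p n ≥ 2
      have hsp2 : 2 ≤ sp p n := by omega
      have hn0 : n ≠ 0 := by omega
      set v := n.factorization p with hv
      set u := n / p ^ v with hudef
      have hfact : p ^ v * u = n := Nat.ordProj_mul_ordCompl_eq_self n p
      have hu : ¬ p ∣ u := Nat.not_dvd_ordCompl hp hn0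
      have hu1 : 1 ≤ u := by
        rcases Nat.eq_zero_or_pos u with h | h
        · rw [h, Nat.mul_zero] at hfact; omega
        · exact h
      have hu2 : 2 ≤ u := by
        by_contra h
        have : u = 1 := by omega
        rw [this, Nat.mul_one] at hfact
        have := sp_pow p hp2 v
        rw [hfact] at this
        omega
      set m := p ^ v * (u - 1) with hm
      have hnm : n = p ^ v + m := by
        have : p ^ v * u = p ^ v * 1 + p ^ v * (u - 1) := by
          rw [← Nat.mul_add]; congr 1; omega
        omega
      have hspm : sp p m = sp p n - 1 := by
        rw [hm, sp_pow_mul p hp2 v _ (by omega), ← hfact,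
          sp_pow_mul p hp2 v _ (by omega), sp_pred p hp2 u hu hu1]
        omega
      have hm1 : 1 ≤ m := by
        have h1 : 0 < p ^ v := Nat.pow_pos (by omega)
        have h2 : 0 < u - 1 := by omega
        exact Nat.mul_pos h1 h2
      obtain ⟨j', hj'1, hj'2, hj'3⟩ := ih m hm1 hkpos (by omega)
      refine ⟨Fin.cons (p ^ v) j', ?_, ?_, ?_⟩
      · intro i
        refine Fin.cases ?_ ?_ i
        · simpa using Nat.one_le_pow v p (by omega)
        · intro i; simpa using hj'1 i
      · rw [Fin.sum_cons, hj'2]; omega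
      · rw [Fin.sum_univ_succ]
        simp only [Fin.cons_succ, Fin.cons_zero]
        rw [hj'3, sp_pow p hp2, hspm]
        omega
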